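/- arXiv:math/0409454 — 3 statements merged into one kernel-verified Lean document; each statement's English description precedes it below -/
import Mathlib

section
/- Let G be a group and let H be an abelian subgroup of G with finite index n = [G : H]. Let m ∈ ℕ and let ρ : G → U(m) be a homomorphism from G into the unitary group of m × m complex matrices such that the range of ρ generates the full matrix algebra M_m(ℂ) as a ℂ-algebra (equivalently, ρ is an irreducible unitary representation of degree m). Then m ≤ n. -/
open Module

lemma common_eigenvector_aux : ∀ (N : ℕ) (V : Type) [AddCommGroup V] [Module ℂ V]
    [FiniteDimensional ℂ V], finrank ℂ V = N → Nontrivial V →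
    ∀ {ι : Type*} (f : ι → Module.End ℂ V), (∀ i j, Commute (f i) (f j)) →
    ∃ v : V, v ≠ 0 ∧ ∀ i, ∃ c : ℂ, f i v = c • v := by
  intro N
  induction N using Nat.strong_induction_on with
  | _ N IH =>
    intro V _ _ _ hN hnt ι f hcomm
    by_cases hsc : ∀ i, ∃ c : ℂ, f i = c • (1 : Module.End ℂ V)
    · obtain ⟨v, hv⟩ := exists_ne (0 : V)
      exact ⟨v, hv, fun i => by
        obtain ⟨c, hc⟩ := hsc i
        exact ⟨c, by simp [hc]⟩⟩
    · push_neg at hsc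
      obtain ⟨i₀, hi₀⟩ := hsc
      obtain ⟨μ, hμ⟩ := Module.End.exists_eigenvalue (f i₀)
      set E := Module.End.eigenspace (f i₀) μ with hE
      have hEne : E ≠ ⊥ := hμ
      have hEnetop : E ≠ ⊤ := by
        intro htop
        apply hi₀ μ
        ext v
        have hv : v ∈ E := htop ▸ Submodule.mem_top
        rw [Module.End.mem_eigenspace_iff] at hv
        simpa using hv
      have hmaps : ∀ i, ∀ v ∈ E, f i v ∈ E := by
        intro i v hv
        rw [Module.End.mem_eigenspace_iff] at hv ⊢
        rw [← Module.End.mul_apply, (hcomm i₀ i).eq, Module.End.mul_apply, hv, map_smul]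
      have hnt' : Nontrivial E := Submodule.nontrivial_iff_ne_bot.mpr hEne
      have hlt : finrank ℂ E < N := hN ▸ Submodule.finrank_lt hEnetop
      obtain ⟨v, hv0, hv⟩ := IH (finrank ℂ E) hlt E rfl hnt'
        (fun i => (f i).restrict (hmaps i))
        (fun i j => by
          ext x
          have := congrFun (congrArg DFunLike.coe (hcomm i j).eq) (x : V)
          rw [Module.End.mul_apply, Module.End.mul_apply] at this
          simpa [Module.End.mul_apply, LinearMap.restrict_apply] using this)
      refine ⟨(v : V), by simpa using hv0, fun i => ?_⟩
      obtain ⟨c, hc⟩ := hv i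
      exact ⟨c, by simpa [LinearMap.restrict_apply] using congrArg Subtype.val hc⟩

/-- If `H` is an abelian subgroup of finite index `n` of a group `G`, and
`ρ : G → U(m)` is a unitary matrix representation whose range generates all of
`M_m(ℂ)` as a `ℂ`-algebra (i.e. `ρ` is irreducible of degree `m`), then `m ≤ n`. -/
theorem stmt_3 {G : Type*} [Group G] (H : Subgroup G)
    (hab : ∀ a b : H, a * b = b * a) (n : ℕ) (hn : H.index = n) (hn0 : n ≠ 0)
    (m : ℕ) (ρ : G →* Matrix.unitaryGroup (Fin m) ℂ)
    (hirr : Algebra.adjoin ℂ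
        (Set.range fun g => (ρ g : Matrix (Fin m) (Fin m) ℂ)) = ⊤) :
    m ≤ n := by
  rcases Nat.eq_zero_or_pos m with hm | hm
  · omega
  have : Nonempty (Fin m) := ⟨⟨0, hm⟩⟩
  have hnt : Nontrivial (Fin m → ℂ) := inferInstance
  -- the product of two matrices in the range of ρ
  have h1 : ∀ a b : G, (ρ a : Matrix (Fin m) (Fin m) ℂ) * (ρ b : Matrix (Fin m) (Fin m) ℂ)
      = (ρ (a * b) : Matrix (Fin m) (Fin m) ℂ) := by
    intro a b; rw [map_mul]; rfl
  set f : H → Module.End ℂ (Fin m → ℂ) :=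
    fun h => Matrix.mulVecLin (ρ (h : G) : Matrix (Fin m) (Fin m) ℂ) with hf
  have hcomm : ∀ a b : H, Commute (f a) (f b) := by
    intro a b
    show f a * f b = f b * f a
    simp only [hf]
    rw [Module.End.mul_eq_comp, Module.End.mul_eq_comp, ← Matrix.mulVecLin_mul,
      ← Matrix.mulVecLin_mul, h1, h1, ← Subgroup.coe_mul, ← Subgroup.coe_mul, hab a b]
  obtain ⟨v, hv0, hv⟩ := common_eigenvector_aux (finrank ℂ (Fin m → ℂ)) (Fin m → ℂ) rfl hnt f hcomm
  -- eigenvector property in mulVec form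
  have heig : ∀ h : H, ∃ c : ℂ, Matrix.mulVec (ρ (h : G) : Matrix (Fin m) (Fin m) ℂ) v = c • v :=
    fun h => hv h
  -- the quotient is finite
  have hfin : Finite (G ⧸ H) := by
    have : Nat.card (G ⧸ H) ≠ 0 := by rw [← Subgroup.index, hn]; exact hn0
    exact Nat.finite_of_card_ne_zero this
  have : Fintype (G ⧸ H) := Fintype.ofFinite _
  set W : Submodule ℂ (Fin m → ℂ) := Submodule.span ℂ
    (Set.range fun q : G ⧸ H =>
      Matrix.mulVec (ρ (Quotient.out q) : Matrix (Fin m) (Fin m) ℂ) v) with hW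
  -- key coset step
  have hstep : ∀ (g x : G), ∃ (q : G ⧸ H) (c : ℂ),
      Matrix.mulVec (ρ (g * x) : Matrix (Fin m) (Fin m) ℂ) v
        = c • Matrix.mulVec (ρ (Quotient.out q) : Matrix (Fin m) (Fin m) ℂ) v := by
    intro g x
    set q : G ⧸ H := QuotientGroup.mk (g * x) with hq
    have hmem : (Quotient.out q)⁻¹ * (g * x) ∈ H := by
      rw [← QuotientGroup.eq]
      exact QuotientGroup.out_eq' q
    set h : H := ⟨(Quotient.out q)⁻¹ * (g * x), hmem⟩ with hh
    have hgx : g * x = Quotient.out q * (h : G) := by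
      simp [hh, mul_assoc]
    obtain ⟨c, hc⟩ := heig h
    refine ⟨q, c, ?_⟩
    rw [hgx, ← h1, ← Matrix.mulVec_mulVec, hc, Matrix.mulVec_smul]
  -- v lies in W
  have hvW : v ∈ W := by
    obtain ⟨q₀, c₀, hc₀⟩ := hstep 1 1
    rw [one_mul, map_one] at hc₀
    have hone : Matrix.mulVec ((1 : Matrix.unitaryGroup (Fin m) ℂ) :
        Matrix (Fin m) (Fin m) ℂ) v = v := by
      simp
    rw [hone] at hc₀
    rw [hc₀]
    exact Submodule.smul_mem _ _ (Submodule.subset_span ⟨q₀, rfl⟩)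
  -- W is invariant under every ρ g
  have hWinv : ∀ g : G, ∀ w ∈ W, Matrix.mulVec (ρ g : Matrix (Fin m) (Fin m) ℂ) w ∈ W := by
    intro g w hw
    induction hw using Submodule.span_induction with
    | mem x hx =>
      obtain ⟨q, rfl⟩ := hx
      obtain ⟨q', c, hc⟩ := hstep g (Quotient.out q)
      rw [Matrix.mulVec_mulVec, h1, hc]
      exact Submodule.smul_mem _ _ (Submodule.subset_span ⟨q', rfl⟩)
    | zero => rw [Matrix.mulVec_zero]; exact Submodule.zero_mem _
    | add x y hx hy ihx ihy =>
      rw [Matrix.mulVec_add]; exact Submodule.add_mem _ ihx ihy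
    | smul c x hx ihx =>
      rw [Matrix.mulVec_smul]; exact Submodule.smul_mem _ _ ihx
  -- W is invariant under the full matrix algebra
  have hAinv : ∀ A : Matrix (Fin m) (Fin m) ℂ, ∀ w ∈ W, Matrix.mulVec A w ∈ W := by
    intro A
    have hA : A ∈ Algebra.adjoin ℂ (Set.range fun g => (ρ g : Matrix (Fin m) (Fin m) ℂ)) := by
      rw [hirr]; trivial
    induction hA using Algebra.adjoin_induction with
    | mem x hx =>
      obtain ⟨g, rfl⟩ := hx
      exact hWinv g
    | algebraMap r =>
      intro w hw
      rw [Algebra.algebraMap_eq_smul_one, Matrix.smul_mulVec, Matrix.one_mulVec]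
      exact Submodule.smul_mem _ _ hw
    | add x y hx hy ihx ihy =>
      intro w hw
      rw [Matrix.add_mulVec]
      exact Submodule.add_mem _ (ihx w hw) (ihy w hw)
    | mul x y hx hy ihx ihy =>
      intro w hw
      rw [← Matrix.mulVec_mulVec]
      exact ihx _ (ihy w hw)
  -- hence W = ⊤
  have hWtop : W = ⊤ := by
    rw [eq_top_iff]
    intro w _
    obtain ⟨j, hj⟩ : ∃ j, v j ≠ 0 := by
      by_contra hc
      push_neg at hc
      exact hv0 (funext hc)
    have hspos : (0:ℝ) < ∑ k, Complex.normSq (v k) :=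
      Finset.sum_pos' (fun k _ => Complex.normSq_nonneg _)
        ⟨j, Finset.mem_univ j, Complex.normSq_pos.mpr hj⟩
    set s : ℂ := ∑ k, v k * (starRingEnd ℂ) (v k) with hsdef
    have hs : s = ((∑ k, Complex.normSq (v k) : ℝ) : ℂ) := by
      rw [hsdef]
      push_cast
      exact Finset.sum_congr rfl fun k _ => Complex.mul_conj (v k)
    have hsne : s ≠ 0 := by
      rw [hs]
      exact_mod_cast hspos.ne'
    set A : Matrix (Fin m) (Fin m) ℂ :=
      Matrix.of fun i k => s⁻¹ * w i * (starRingEnd ℂ) (v k) with hA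
    have hAv : Matrix.mulVec A v = w := by
      funext i
      calc Matrix.mulVec A v i = ∑ k, s⁻¹ * w i * (starRingEnd ℂ) (v k) * v k := by
            simp [Matrix.mulVec, dotProduct, hA]
        _ = s⁻¹ * w i * ∑ k, v k * (starRingEnd ℂ) (v k) := by
            rw [Finset.mul_sum]
            exact Finset.sum_congr rfl fun k _ => by ring
        _ = w i := by
            rw [← hsdef]
            field_simp
    rw [← hAv]
    exact hAinv A v hvW
  -- conclude by a dimension count
  calc m = finrank ℂ (Fin m → ℂ) := (Module.finrank_fin_fun ℂ).symm
    _ = finrank ℂ W := by rw [hWtop, finrank_top]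
    _ ≤ Fintype.card (G ⧸ H) := finrank_range_le_card _
    _ = n := by rw [← Nat.card_eq_fintype_card, ← Subgroup.index, hn]
end

section
/- Let G be a finite group and let H be an abelian subgroup of G. Then every irreducible finite-dimensional complex representation V of G satisfies dim_ℂ V ≤ [G : H]. -/
open CategoryTheory Module in
private lemma aux_top' {G : Type} [Group G] (V : FDRep ℂ G) (hV : Simple V)
    (p : Submodule ℂ V) (hinv : ∀ (g : G) x, x ∈ p → V.ρ g x ∈ p) (hne : p ≠ ⊥) :
    p = ⊤ := by
  let ρ' : Representation ℂ G p := {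
    toFun := fun g => (V.ρ g).restrict (fun x hx => hinv g x hx)
    map_one' := by ext x; simp
    map_mul' := fun g g' => by ext x; simp }
  let W : FDRep ℂ G := FDRep.of ρ'
  let f : W ⟶ V := ⟨ConcreteCategory.ofHom p.subtype, fun g => by ext x; rfl⟩
  have hinj : Function.Injective ⇑f.hom := Subtype.val_injective
  haveI : Mono f := by
    apply ConcreteCategory.mono_of_injective
    exact hinj
  have hf0 : f ≠ 0 := by
    obtain ⟨x, hxp, hx0⟩ := Submodule.exists_mem_ne_zero_of_ne_bot hne
    intro h
    apply hx0
    have : f.hom ⟨x, hxp⟩ = (0 : W ⟶ V).hom ⟨x, hxp⟩ := by rw [h]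
    exact this
  haveI : IsIso f := (Simple.mono_isIso_iff_nonzero f).mpr hf0
  have hsurj : Function.Surjective ⇑f.hom := by
    intro y
    refine ⟨(CategoryTheory.inv f).hom y, ?_⟩
    have := congrArg (fun φ : V ⟶ V => φ.hom y) (IsIso.inv_hom_id f)
    simp only [Action.comp_hom, Action.id_hom] at this
    exact this
  rw [eq_top_iff]
  intro y _
  obtain ⟨x, hx⟩ := hsurj y
  exact hx ▸ x.2


open CategoryTheory in
/-- If `H` is an abelian subgroup of a finite group `G`, then every irreducible
finite-dimensional complex representation `V` of `G` satisfies `dim V ≤ [G : H]`. -/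
theorem stmt_4 {G : Type} [Group G] [Finite G] (H : Subgroup G)
    (hab : ∀ a b : H, a * b = b * a)
    (V : FDRep ℂ G) (hV : Simple V) :
    Module.finrank ℂ V ≤ H.index := by
  open Module in
  classical
  rcases subsingleton_or_nontrivial V with hsub | hnt
  · rw [Module.finrank_zero_of_subsingleton]
    exact Nat.zero_le _
  -- the set of nonzero H-invariant submodules
  set S : Set (Submodule ℂ V) :=
    {p | p ≠ ⊥ ∧ ∀ (h : H) x, x ∈ p → V.ρ (h : G) x ∈ p} with hS
  have htb : (⊤ : Submodule ℂ V) ≠ ⊥ := by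
    obtain ⟨x, hx⟩ := exists_ne (0 : V)
    intro hbt
    exact hx ((Submodule.mem_bot ℂ).mp (hbt ▸ Submodule.mem_top))
  have hStop : (⊤ : Submodule ℂ V) ∈ S := ⟨htb, fun _ _ _ => Submodule.mem_top⟩
  obtain ⟨p, hpS, hpmin⟩ : ∃ p ∈ S, ∀ q ∈ S, finrank ℂ p ≤ finrank ℂ q := by
    have hne : ((fun p : Submodule ℂ V => finrank ℂ p) '' S).Nonempty :=
      ⟨_, ⟨⊤, hStop, rfl⟩⟩
    obtain ⟨p, hpS, hpn⟩ := Nat.sInf_mem hne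
    refine ⟨p, hpS, fun q hq => ?_⟩
    have hle := Nat.sInf_le
      (show finrank ℂ q ∈ (fun p : Submodule ℂ (V : Type) => finrank ℂ p) '' S from ⟨q, hq, rfl⟩)
    rw [← hpn] at hle
    exact hle
  obtain ⟨hpbot, hpinv⟩ := hpS
  obtain ⟨v, hvp, hv0⟩ := Submodule.exists_mem_ne_zero_of_ne_bot hpbot
  haveI : Nontrivial p := ⟨⟨v, hvp⟩, 0, by simpa using hv0⟩
  -- v is a common eigenvector for H
  have hchi : ∀ h : H, ∃ c : ℂ, V.ρ (h : G) v = c • v := by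
    intro h
    set e : Module.End ℂ p := (V.ρ (h : G)).restrict (fun x hx => hpinv h x hx) with he
    obtain ⟨c, hc⟩ := Module.End.exists_eigenvalue e
    obtain ⟨w, hw⟩ := hc.exists_hasEigenvector
    have hcomm : ∀ (h' : H) (x : V), V.ρ (h : G) (V.ρ (h' : G) x) = V.ρ (h' : G) (V.ρ (h : G) x) := by
      intro h' x
      have hmul : ((h : G) * (h' : G)) = ((h' : G) * (h : G)) := by
        exact_mod_cast congrArg (Subtype.val) (hab h h')
      calc V.ρ (h : G) (V.ρ (h' : G) x) = V.ρ ((h : G) * (h' : G)) x := by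
            rw [map_mul]; rfl
        _ = V.ρ ((h' : G) * (h : G)) x := by rw [hmul]
        _ = V.ρ (h' : G) (V.ρ (h : G) x) := by rw [map_mul]; rfl
    set E : Submodule ℂ V := {
      carrier := {x | x ∈ p ∧ V.ρ (h : G) x = c • x}
      add_mem' := fun {a b} ha hb => ⟨p.add_mem ha.1 hb.1, by rw [map_add, ha.2, hb.2, smul_add]⟩
      zero_mem' := ⟨p.zero_mem, by rw [map_zero, smul_zero]⟩
      smul_mem' := fun r {x} hx => ⟨p.smul_mem r hx.1, by
        rw [map_smul, hx.2, smul_comm]⟩ } with hE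
    have hwE : (w : V) ∈ E := by
      refine ⟨w.2, ?_⟩
      have := congrArg (Subtype.val) hw.apply_eq_smul
      simpa [he, LinearMap.restrict_apply] using this
    have hES : E ∈ S := by
      constructor
      · intro hbot
        rw [hbot] at hwE
        exact hw.2 (Subtype.ext (by simpa using hwE))
      · intro h' x hx
        refine ⟨hpinv h' x hx.1, ?_⟩
        rw [hcomm h' x, hx.2, map_smul]
    have hEp : E ≤ p := fun x hx => hx.1
    have hEeq : E = p := Submodule.eq_of_le_of_finrank_le hEp (hpmin E hES)
    have hvE : v ∈ E := hEeq.symm ▸ hvp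
    exact ⟨c, hvE.2⟩
  -- span of translates of v over coset representatives
  haveI : Fintype (G ⧸ H) := Fintype.ofFinite _
  set s : Finset V := Finset.univ.image (fun q : G ⧸ H => V.ρ q.out v) with hs
  have claim : ∀ g : G, V.ρ g v ∈ Submodule.span ℂ (s : Set V) := by
    intro g
    set q : G ⧸ H := QuotientGroup.mk g with hq
    have hout : (QuotientGroup.mk q.out : G ⧸ H) = QuotientGroup.mk g := by
      rw [QuotientGroup.out_eq']
    have hH : q.out⁻¹ * g ∈ H := QuotientGroup.eq.mp hout
    obtain ⟨c, hc⟩ := hchi ⟨q.out⁻¹ * g, hH⟩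
    have hdecomp : V.ρ g v = c • V.ρ q.out v := by
      have hg : g = q.out * (q.out⁻¹ * g) := by group
      conv_lhs => rw [hg]
      rw [map_mul]
      show V.ρ q.out (V.ρ (q.out⁻¹ * g) v) = _
      rw [hc, map_smul]
    rw [hdecomp]
    refine Submodule.smul_mem _ _ (Submodule.subset_span ?_)
    simp only [hs, Finset.coe_image, Set.mem_image, Finset.mem_coe, Finset.mem_univ]
    exact ⟨q, by simp⟩
  have hsp : Submodule.span ℂ (s : Set V) = ⊤ := by
    apply aux_top' V hV
    · intro g x hx
      induction hx using Submodule.span_induction with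
      | mem y hy =>
        simp only [hs, Finset.coe_image, Set.mem_image] at hy
        obtain ⟨q, _, rfl⟩ := hy
        have : V.ρ g (V.ρ q.out v) = V.ρ (g * q.out) v := by rw [map_mul]; rfl
        rw [this]
        exact claim _
      | zero => simp
      | add y z _ _ hy hz => rw [map_add]; exact Submodule.add_mem _ hy hz
      | smul r y _ hy => rw [map_smul]; exact Submodule.smul_mem _ _ hy
    · intro hbot
      apply hv0
      have hv : v ∈ Submodule.span ℂ (s : Set V) := by
        have := claim 1
        rwa [map_one] at this
      rw [hbot] at hv
      exact (Submodule.mem_bot _).mp hv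
  calc finrank ℂ V = finrank ℂ (⊤ : Submodule ℂ V) := (finrank_top ℂ V).symm
    _ = finrank ℂ (Submodule.span ℂ (s : Set V)) := by rw [hsp]
    _ ≤ s.card := finrank_span_finset_le_card s
    _ ≤ Fintype.card (G ⧸ H) := Finset.card_image_le.trans (by simp)
    _ = H.index := by rw [Subgroup.index, Nat.card_eq_fintype_card]
end

section
/- Every abelian subgroup H of the alternating group A₅ (the group of even permutations of a five-element set) has index strictly greater than 5, i.e. [A₅ : H] > 5. -/
set_option maxHeartbeats 8000000 in
/-- Every nonidentity element of `A₅` commutes with at most `5` elements. -/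
lemma key5 : ∀ x : alternatingGroup (Fin 5), x = 1 ∨
    (Finset.univ.filter (fun y => y * x = x * y)).card ≤ 5 := by decide

set_option maxRecDepth 100000 in
lemma cardA5 : Nat.card (alternatingGroup (Fin 5)) = 60 := by
  rw [Nat.card_eq_fintype_card]
  have h := two_mul_card_alternatingGroup (α := Fin 5)
  rw [Fintype.card_perm] at h
  norm_num [Fintype.card_fin, Nat.factorial] at h
  have e : Fintype.card (alternatingGroup (Fin 5)) =
      Fintype.card {x : Equiv.Perm (Fin 5) // Equiv.Perm.sign x = 1} := rfl
  omega

/-- Every abelian subgroup of the alternating group `A₅` has index strictly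
greater than `5`. -/
theorem stmt_7 (H : Subgroup (alternatingGroup (Fin 5)))
    (hab : ∀ a b : H, a * b = b * a) :
    5 < H.index := by
  classical
  have hcard : Nat.card H ≤ 5 := by
    rcases eq_or_ne H ⊥ with rfl | hne
    · simp
    · obtain ⟨x, hxH, hx1⟩ := (Subgroup.nontrivial_iff_exists_ne_one H).mp
        (H.bot_or_nontrivial.resolve_left hne)
      rcases key5 x with h1 | hle
      · exact absurd h1 hx1
      · calc Nat.card H = (Finset.univ.filter (fun y => y ∈ H)).card := by
              rw [Nat.card_eq_fintype_card, Fintype.card_subtype]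
          _ ≤ (Finset.univ.filter (fun y => y * x = x * y)).card := by
              apply Finset.card_le_card
              intro y hy
              simp only [Finset.mem_filter, Finset.mem_univ, true_and] at hy ⊢
              exact Subtype.ext_iff.mp (hab ⟨y, hy⟩ ⟨x, hxH⟩)
          _ ≤ 5 := hle
  have hmul := H.card_mul_index
  rw [cardA5] at hmul
  by_contra hle
  push_neg at hle
  have := Nat.mul_le_mul hcard hle
  omega
end
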